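/- Every thickly syndetic subset of ℤ₊ containing 0 contains an sm-set; that is, for every thickly syndetic set F ⊆ ℤ₊ with 0 ∈ F there exist a minimal topological dynamical system (Y,S), a point y ∈ Y and an open neighborhood V of y such that N(y,V) ⊆ F. -/

import Mathlib

open Set Filter Topology Function

namespace PaperFormal

/-- The return-time set `N(x,U) = {n ∈ ℤ₊ : Tⁿ x ∈ U}`. -/
def retTimes {X : Type} (T : X → X) (x : X) (U : Set X) : Set ℕ :=
  {n : ℕ | T^[n] x ∈ U}

/-- A point is recurrent if `N(x,U)` is infinite for every neighborhood `U` of `x`. -/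
def RecurrentPt {X : Type} [TopologicalSpace X] (T : X → X) (x : X) : Prop :=
  ∀ U ∈ nhds x, (retTimes T x U).Infinite

/-- The (forward) orbit closure of a point. -/
def orbitClosure {X : Type} [TopologicalSpace X] (T : X → X) (x : X) : Set X :=
  closure (Set.range fun n : ℕ => T^[n] x)

/-- A pair `(x,y)` is proximal if `lim T^{nᵢ} x = lim T^{nᵢ} y` along some sequence `nᵢ`. -/
def ProximalPair {X : Type} [TopologicalSpace X] (T : X → X) (x y : X) : Prop :=
  ∃ (u : ℕ → ℕ) (z : X),
    Tendsto (fun i => T^[u i] x) atTop (nhds z) ∧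
    Tendsto (fun i => T^[u i] y) atTop (nhds z)

/-- A point `x` is distal if every `y` in its orbit closure proximal to `x` equals `x`. -/
def DistalPt {X : Type} [TopologicalSpace X] (T : X → X) (x : X) : Prop :=
  ∀ y ∈ orbitClosure T x, ProximalPair T x y → y = x

/-- `A` is a minimal set: nonempty, closed, invariant, with no proper such subset. -/
def IsMinimalSet {X : Type} [TopologicalSpace X] (T : X → X) (A : Set X) : Prop :=
  A.Nonempty ∧ IsClosed A ∧ Set.MapsTo T A A ∧
    ∀ B ⊆ A, B.Nonempty → IsClosed B → Set.MapsTo T B B → B = A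

/-- A point is minimal (almost periodic) if its orbit closure is a minimal set. -/
def IsMinimalPt {X : Type} [TopologicalSpace X] (T : X → X) (x : X) : Prop :=
  IsMinimalSet T (orbitClosure T x)

/-- A minimal system: no proper nonempty closed invariant subset. -/
def MinimalSys {X : Type} [TopologicalSpace X] (T : X → X) : Prop :=
  ∀ B : Set X, B.Nonempty → IsClosed B → Set.MapsTo T B B → B = Set.univ

/-- A transitive system: `N(U,V)` is infinite for all opene `U`, `V`. -/
def TransitiveSys {X : Type} [TopologicalSpace X] (T : X → X) : Prop :=
  ∀ U V : Set X, IsOpen U → IsOpen V → U.Nonempty → V.Nonempty →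
    {n : ℕ | (U ∩ T^[n] ⁻¹' V).Nonempty}.Infinite

/-- Transitivity of the subsystem on an invariant subset `A` (relative open sets). -/
def TransitiveOn {X : Type} [TopologicalSpace X] (T : X → X) (A : Set X) : Prop :=
  ∀ U V : Set X, IsOpen U → IsOpen V → (U ∩ A).Nonempty → (V ∩ A).Nonempty →
    {n : ℕ | (U ∩ A ∩ T^[n] ⁻¹' V).Nonempty}.Infinite

/-- A transitive point: a point with dense forward orbit. -/
def TransPt {X : Type} [TopologicalSpace X] (T : X → X) (x : X) : Prop :=
  Dense (Set.range fun n : ℕ => T^[n] x)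

/-- Finite sums of the sequence `p` over nonempty finite index sets contained in `[n,∞)`. -/
def FSfrom (p : ℕ → ℕ) (n : ℕ) : Set ℕ :=
  {m | ∃ α : Finset ℕ, α.Nonempty ∧ (∀ i ∈ α, n ≤ i) ∧ m = ∑ i ∈ α, p i}

/-- Finite sums of the sequence `p` over nonempty finite index sets. -/
def FS (p : ℕ → ℕ) : Set ℕ := FSfrom p 0

/-- An IP set: a set containing all finite sums of some sequence of natural numbers. -/
def IPSet (A : Set ℕ) : Prop :=
  ∃ p : ℕ → ℕ, (∀ i, 0 < p i) ∧ FS p ⊆ A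

/-- An IP* set: a set meeting every IP set. -/
def IPStar (A : Set ℕ) : Prop :=
  ∀ B : Set ℕ, IPSet B → (A ∩ B).Nonempty

/-- A syndetic set: a set with bounded gaps. -/
def Syndetic (S : Set ℕ) : Prop :=
  ∃ N : ℕ, ∀ m : ℕ, ∃ k ∈ S, m ≤ k ∧ k ≤ m + N

/-- A thick set: a set containing arbitrarily long runs of consecutive integers. -/
def Thick (S : Set ℕ) : Prop :=
  ∀ n : ℕ, ∃ m : ℕ, ∀ i ≤ n, m + i ∈ S

/-- A piecewise syndetic set: an intersection of a syndetic set with a thick set. -/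
def PiecewiseSyndetic (A : Set ℕ) : Prop :=
  ∃ S₁ S₂ : Set ℕ, Syndetic S₁ ∧ Thick S₂ ∧ A = S₁ ∩ S₂

/-- A thickly syndetic set: a set meeting every piecewise syndetic set. -/
def ThicklySyndetic (A : Set ℕ) : Prop :=
  ∀ B : Set ℕ, PiecewiseSyndetic B → (A ∩ B).Nonempty

/-- `x` is `F`-recurrent for the family `F` if `N(x,U) ∈ F` for every neighborhood `U`. -/
def FRecurrentPt {X : Type} [TopologicalSpace X] (F : Set (Set ℕ)) (T : X → X) (x : X) :
    Prop :=
  ∀ U ∈ nhds x, retTimes T x U ∈ F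

/-- `x` is `F`-product recurrent: `(x,y)` is recurrent for every `F`-recurrent point `y`
in any topological dynamical system `(Y,S)`. -/
def FProductRecurrent {X : Type} [TopologicalSpace X] (F : Set (Set ℕ)) (T : X → X)
    (x : X) : Prop :=
  ∀ (Y : Type) [MetricSpace Y] [CompactSpace Y] (S : Y → Y),
    Continuous S → Function.Surjective S →
      ∀ y : Y, FRecurrentPt F S y → RecurrentPt (Prod.map T S) (x, y)

/-- A joining of `(X,T)` and `(Y,S)`: a nonempty closed invariant subset of `X × Y`
projecting onto both coordinates. -/
def Joining {X Y : Type} [TopologicalSpace X] [TopologicalSpace Y]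
    (T : X → X) (S : Y → Y) (J : Set (X × Y)) : Prop :=
  J.Nonempty ∧ IsClosed J ∧ Set.MapsTo (Prod.map T S) J J ∧
    Prod.fst '' J = Set.univ ∧ Prod.snd '' J = Set.univ

/-- Two systems are disjoint if their only joining is the full product. -/
def DisjointSys {X Y : Type} [TopologicalSpace X] [TopologicalSpace Y]
    (T : X → X) (S : Y → Y) : Prop :=
  ∀ J : Set (X × Y), Joining T S J → J = Set.univ

/-- Property (★) of a point: for each neighborhood `V` of `x` there is `n` such that for
every finite set `S` whose distinct elements are at distance `≥ n`, some common shift `ℓ`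
puts all of `T^{s+ℓ} x`, `s ∈ S`, inside `V`. -/
def StarProp {X : Type} [TopologicalSpace X] (T : X → X) (x : X) : Prop :=
  ∀ V ∈ nhds x, ∃ n : ℕ, ∀ S : Finset ℕ,
    (∀ s ∈ S, ∀ t ∈ S, s < t → n ≤ t - s) →
      ∃ ℓ : ℕ, ∀ s ∈ S, T^[s + ℓ] x ∈ V

/-- `F` is an independence set for the pair `(U₀, U₁)`. -/
def IndepSet {X : Type} (T : X → X) (U₀ U₁ : Set X) (F : Set ℕ) : Prop :=
  ∀ J : Finset ℕ, ↑J ⊆ F → J.Nonempty → ∀ s : ℕ → Bool,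
    (⋂ j ∈ J, T^[j] ⁻¹' (if s j then U₁ else U₀)).Nonempty

attribute [local instance] Classical.propDecidable

/-- positions where a run of length `n` inside `F` starts -/
def Dn (F : Set ℕ) (n : ℕ) : Set ℕ := {m | ∀ i < n, m + i ∈ F}

lemma mem_Dn {F : Set ℕ} {n d : ℕ} : d ∈ Dn F n ↔ ∀ i < n, d + i ∈ F := Iff.rfl

lemma Dn_antitone {F : Set ℕ} {m n : ℕ} (h : m ≤ n) : Dn F n ⊆ Dn F m :=
  fun _ hd i hi => hd i (lt_of_lt_of_le hi h)

lemma Dn_mem_F {F : Set ℕ} {n d : ℕ} (hd : d ∈ Dn F n) (hn : 0 < n) : d ∈ F := by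
  have := hd 0 hn; simpa using this

lemma mem_Dn_one {F : Set ℕ} {d : ℕ} (hd : d ∈ F) : d ∈ Dn F 1 := by
  intro i hi
  interval_cases i
  simpa using hd

lemma Dn_glue {F : Set ℕ} {a b r t : ℕ} (ha : a ∈ Dn F r) (hb : b ∈ Dn F t)
    (hab : a ≤ b) (hba : b ≤ a + r) : a ∈ Dn F (b + t - a) := by
  intro i hi
  by_cases hc : a + i < b
  · exact ha i (by omega)
  · have : a + i = b + (a + i - b) := by omega
    rw [this]
    exact hb _ (by omega)

/-- Key consequence of thick syndeticity: each `Dn F n` is syndetic. -/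
lemma Dn_syndetic {F : Set ℕ} (hF : ThicklySyndetic F) (n : ℕ) :
    ∃ N, ∀ m, ∃ d, m ≤ d ∧ d ≤ m + N ∧ d ∈ Dn F n := by
  by_contra hcon
  push_neg at hcon
  choose M hM using hcon
  -- recursively built intervals, kept opaque
  obtain ⟨g, hgs⟩ : ∃ g : ℕ → ℕ × ℕ, ∀ t : ℕ, g (t + 1) =
      (max (M ((g t).2 + n + 2 + (t + 1))) ((g t).2 + n + 2),
        max (M ((g t).2 + n + 2 + (t + 1))) ((g t).2 + n + 2) + (t + 1) + n) := by
    refine ⟨fun t => Nat.rec (motive := fun _ => ℕ × ℕ) (0, 0)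
      (fun t ih =>
        (max (M (ih.2 + n + 2 + (t + 1))) (ih.2 + n + 2),
          max (M (ih.2 + n + 2 + (t + 1))) (ih.2 + n + 2) + (t + 1) + n)) t, fun t => rfl⟩
  have hP2 : ∀ t : ℕ, (g t).2 + n + 2 ≤ (g (t + 1)).1 := by
    intro t; rw [hgs t]; exact le_max_right _ _
  have hP3 : ∀ t : ℕ, (g (t + 1)).2 = (g (t + 1)).1 + (t + 1) + n := by
    intro t; rw [hgs t]
  have hmono : ∀ t r : ℕ, t ≤ r → (g t).2 ≤ (g r).2 := by
    intro t r htr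
    induction r with
    | zero => simp_all
    | succ r ih =>
      rcases Nat.lt_or_ge t (r + 1) with h | h
      · have h1 := ih (by omega)
        have h2 := hP2 r
        have h3 := hP3 r
        omega
      · have : t = r + 1 := by omega
        simp [this]
  have hP1 : ∀ t x : ℕ, (g (t + 1)).1 ≤ x → x ≤ (g (t + 1)).1 + (t + 1) → x ∉ Dn F n := by
    intro t x h1 h2
    have hle : M ((g t).2 + n + 2 + (t + 1)) ≤ x := le_trans (by rw [hgs t]; exact le_max_left _ _) h1
    have hle2 : x ≤ M ((g t).2 + n + 2 + (t + 1)) + ((g t).2 + n + 2 + (t + 1)) := by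
      have : (g (t + 1)).1 ≤ M ((g t).2 + n + 2 + (t + 1)) + ((g t).2 + n + 2) := by
        rw [hgs t]; exact max_le (by omega) (by omega)
      omega
    exact hM _ x hle hle2
  -- the piecewise syndetic set
  set S₂ : Set ℕ := {x | ∃ t : ℕ, (g (t + 1)).1 ≤ x ∧ x ≤ (g (t + 1)).2} with hS₂
  set S₁ : Set ℕ := {x | x ∉ F ∨ x ∉ S₂} with hS₁
  have hthick : Thick S₂ := by
    intro n'
    refine ⟨(g (n' + 1)).1, fun i hi => ⟨n', by omega, ?_⟩⟩
    rw [hP3 n']; omega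
  have hsynd : Syndetic S₁ := by
    refine ⟨n + 1, fun m => ?_⟩
    by_cases hall : ∀ ii ≤ n + 1, (m + ii ∈ F ∧ m + ii ∈ S₂)
    · exfalso
      obtain ⟨t, hst, hen⟩ := (hall 0 (by omega)).2
      simp only [Nat.add_zero] at hst hen
      have h3 := hP3 t
      by_cases hcase : m ≤ (g (t + 1)).1 + (t + 1)
      · have hnotDn := hP1 t m hst hcase
        rw [mem_Dn] at hnotDn
        push_neg at hnotDn
        obtain ⟨i, hi, hiF⟩ := hnotDn
        exact hiF (hall i (by omega)).1
      · -- m beyond the "bad window"; consider the point just after the interval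
        have hqm : m + 1 ≤ (g (t + 1)).2 + 1 := by omega
        have hqn : (g (t + 1)).2 + 1 ≤ m + n := by omega
        have hqS₂ : (g (t + 1)).2 + 1 ∈ S₂ := by
          have h4 := (hall ((g (t + 1)).2 + 1 - m) (by omega)).2
          have heq : m + ((g (t + 1)).2 + 1 - m) = (g (t + 1)).2 + 1 := by omega
          rwa [heq] at h4
        obtain ⟨r, hstr, henr⟩ := hqS₂
        rcases Nat.lt_or_ge r t with h | h
        · have := hmono (r + 1) (t + 1) (by omega)
          omega
        · rcases Nat.eq_or_lt_of_le h with h' | h'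
          · subst h'; omega
          · have h1 := hP2 r
            have h2 := hmono (t + 1) r (by omega)
            omega
    · push_neg at hall
      obtain ⟨ii, hii, hbad⟩ := hall
      have hmem : m + ii ∈ S₁ := by
        rw [hS₁, Set.mem_setOf_eq]
        by_cases hf : m + ii ∈ F
        · exact Or.inr (hbad hf)
        · exact Or.inl hf
      exact ⟨m + ii, hmem, by omega, by omega⟩
  obtain ⟨x, hxF, hxB⟩ := hF (S₁ ∩ S₂) ⟨S₁, S₂, hsynd, hthick, rfl⟩
  obtain ⟨hx1, hx2⟩ := hxB
  rw [hS₁, Set.mem_setOf_eq] at hx1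
  tauto


/-! ### The construction of the minimal point -/

section Aux1

variable (F : Set ℕ)

/-- least element of `Dn F n` that is `≥ m` (0 if none) -/
noncomputable def nextD (n m : ℕ) : ℕ := sInf {d | m ≤ d ∧ d ∈ Dn F n}

/-- the hierarchy of prefix lengths -/
noncomputable def ell : ℕ → ℕ
  | 0 => 1
  | k + 1 => nextD F (ell k) (ell k) + ell k

/-- the level of a position `e` relative to stage `k+1` -/
noncomputable def jstar (k e : ℕ) : ℕ := Nat.findGreatest (fun j => e ∈ Dn F (ell F j)) k

/-- length of the atom starting at `e` in stage `k+1` -/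
noncomputable def alen (k e : ℕ) : ℕ := if e ∈ F then ell F (jstar F k e) else 1

/-- starts of the atoms of stage `k+1` -/
noncomputable def aseq (k : ℕ) : ℕ → ℕ
  | 0 => ell F k
  | i + 1 => aseq k i + alen F k (aseq k i)

/-- the stage to which position `q` belongs -/
noncomputable def posStage (q : ℕ) : ℕ := Nat.findGreatest (fun k => ell F k ≤ q) q

/-- index of the atom containing `q` -/
noncomputable def aidx (q : ℕ) : ℕ :=
  Nat.findGreatest (fun i => aseq F (posStage F q) i ≤ q) q

/-- start of the atom containing `q` -/
noncomputable def atomStart (q : ℕ) : ℕ := aseq F (posStage F q) (aidx F q)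

variable {F}

lemma ell_pos : ∀ k, 1 ≤ ell F k := by
  intro k
  induction k with
  | zero => simp [ell]
  | succ k ih => rw [ell]; omega

lemma alen_pos (k e : ℕ) : 1 ≤ alen F k e := by
  rw [alen]
  split
  · exact ell_pos _
  · exact le_refl 1

lemma aseq_zero (k : ℕ) : aseq F k 0 = ell F k := rfl

lemma aseq_succ (k i : ℕ) : aseq F k (i + 1) = aseq F k i + alen F k (aseq F k i) := rfl

lemma aseq_lower (k : ℕ) : ∀ i, ell F k + i ≤ aseq F k i := by
  intro i
  induction i with
  | zero => simp [aseq_zero]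
  | succ i ih =>
    have := alen_pos (F := F) k (aseq F k i)
    rw [aseq_succ]; omega

lemma aseq_strictMono (k : ℕ) : StrictMono (aseq F k) := by
  apply strictMono_nat_of_lt_succ
  intro i
  have := alen_pos (F := F) k (aseq F k i)
  rw [aseq_succ]; omega

lemma posStage_le {q : ℕ} (hq : 1 ≤ q) : ell F (posStage F q) ≤ q := by
  unfold posStage
  exact Nat.findGreatest_spec (P := fun k => ell F k ≤ q) (m := 0) (Nat.zero_le q) (by simpa [ell] using hq)

lemma atomStart_le {q : ℕ} (hq : 1 ≤ q) : atomStart F q ≤ q := by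
  unfold atomStart aidx
  exact Nat.findGreatest_spec (P := fun i => aseq F (posStage F q) i ≤ q) (m := 0) (Nat.zero_le q) (by simpa [aseq_zero] using posStage_le hq)

lemma atomStart_pos (q : ℕ) : 1 ≤ atomStart F q := by
  calc 1 ≤ ell F (posStage F q) := ell_pos _
  _ ≤ aseq F (posStage F q) (aidx F q) := by have := aseq_lower (F := F) (posStage F q) (aidx F q); omega

end Aux1

/-- the minimal point of the subshift, as a 0-1 sequence -/
noncomputable def yfun (F : Set ℕ) : ℕ → Bool
  | 0 => true
  | q + 1 =>
      if atomStart F (q + 1) ∈ F then yfun F ((q + 1) - atomStart F (q + 1)) else false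
  decreasing_by
    exact Nat.sub_lt (Nat.succ_pos _) (atomStart_pos _)

section Aux2

variable {F : Set ℕ}

lemma yfun_zero : yfun F 0 = true := by rw [yfun]

lemma yfun_eq {q : ℕ} (hq : 1 ≤ q) :
    yfun F q =
      if atomStart F q ∈ F then yfun F (q - atomStart F q) else false := by
  cases q with
  | zero => omega
  | succ q' => rw [yfun]


lemma atomStart_def (q : ℕ) : atomStart F q = aseq F (posStage F q) (aidx F q) := rfl

lemma nextD_min {n m d : ℕ} (h1 : m ≤ d) (h2 : d ∈ Dn F n) : nextD F n m ≤ d :=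
  Nat.sInf_le ⟨h1, h2⟩

lemma nextD_spec (hF : ThicklySyndetic F) (n m : ℕ) :
    m ≤ nextD F n m ∧ nextD F n m ∈ Dn F n := by
  obtain ⟨N, hN⟩ := Dn_syndetic hF n
  obtain ⟨d, hd1, _, hd3⟩ := hN m
  exact Nat.sInf_mem (⟨d, ⟨hd1, hd3⟩⟩ : {d | m ≤ d ∧ d ∈ Dn F n}.Nonempty)

lemma ell_succ (k : ℕ) : ell F (k + 1) = nextD F (ell F k) (ell F k) + ell F k := rfl

lemma estar_ge (hF : ThicklySyndetic F) (k : ℕ) :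
    ell F k ≤ nextD F (ell F k) (ell F k) := (nextD_spec hF _ _).1

lemma estar_mem (hF : ThicklySyndetic F) (k : ℕ) :
    nextD F (ell F k) (ell F k) ∈ Dn F (ell F k) := (nextD_spec hF _ _).2

lemma ell_strictMono (hF : ThicklySyndetic F) : StrictMono (ell F) := by
  apply strictMono_nat_of_lt_succ
  intro k
  have h1 := estar_ge hF k
  have h2 := ell_pos (F := F) k
  rw [ell_succ]; omega

lemma ell_lower (hF : ThicklySyndetic F) (k : ℕ) : k + 1 ≤ ell F k := by
  induction k with
  | zero => simp [ell]
  | succ k ih =>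
    have := ell_strictMono hF (Nat.lt_succ_self k)
    simp only [Nat.succ_eq_add_one] at this
    omega

lemma ell_two_mul (hF : ThicklySyndetic F) (k : ℕ) : 2 * ell F k ≤ ell F (k + 1) := by
  rw [ell_succ]; have := estar_ge hF k; omega

lemma jstar_le (k e : ℕ) : jstar F k e ≤ k := Nat.findGreatest_le _

lemma jstar_spec {k e : ℕ} (he : e ∈ F) : e ∈ Dn F (ell F (jstar F k e)) := by
  unfold jstar
  exact Nat.findGreatest_spec (P := fun j => e ∈ Dn F (ell F j)) (m := 0) (Nat.zero_le k)
    (by simpa [ell] using mem_Dn_one he)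

lemma le_jstar {k e j : ℕ} (hjk : j ≤ k) (hj : e ∈ Dn F (ell F j)) : j ≤ jstar F k e :=
  Nat.le_findGreatest hjk hj

lemma alen_mem {k e : ℕ} (he : e ∈ F) : alen F k e = ell F (jstar F k e) := if_pos he

lemma alen_not_mem {k e : ℕ} (he : e ∉ F) : alen F k e = 1 := if_neg he

lemma mem_Dn_alen {k e : ℕ} (he : e ∈ F) : e ∈ Dn F (alen F k e) := by
  rw [alen_mem he]; exact jstar_spec he

/-- Key lemma: an atom that contains a point of `Dn F (ell F j)` has level at least `j`. -/
lemma atom_level (hF : ThicklySyndetic F) {k j p d : ℕ} (hjk : j ≤ k)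
    (hd : d ∈ Dn F (ell F j)) (hpd : p ≤ d) (hdp : d < p + alen F k p) :
    p ∈ Dn F (ell F j) ∧ ell F j ≤ alen F k p := by
  have hj1 : 1 ≤ ell F j := ell_pos j
  by_cases hpF : p ∈ F
  · have hpDn := mem_Dn_alen (k := k) hpF
    have hmem : p ∈ Dn F (ell F j) := by
      by_cases hcase : d + ell F j ≤ p + alen F k p
      · exact Dn_antitone (by omega) hpDn
      · have hglue := Dn_glue hpDn hd hpd (by omega)
        exact Dn_antitone (by omega) hglue
    refine ⟨hmem, ?_⟩
    have hjs := le_jstar hjk hmem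
    rw [alen_mem hpF]
    exact (ell_strictMono hF).monotone hjs
  · exfalso
    rw [alen_not_mem hpF] at hdp
    have : p = d := by omega
    subst this
    exact hpF (Dn_mem_F hd hj1)

lemma exists_aseq_eq_estar (hF : ThicklySyndetic F) (k : ℕ) :
    ∃ i, aseq F k i = nextD F (ell F k) (ell F k) := by
  set e := nextD F (ell F k) (ell F k) with he
  have h0 : aseq F k 0 ≤ e := by rw [aseq_zero]; exact estar_ge hF k
  set i := Nat.findGreatest (fun i => aseq F k i ≤ e) e with hi
  have hile : aseq F k i ≤ e :=
    Nat.findGreatest_spec (P := fun i => aseq F k i ≤ e) (m := 0) (Nat.zero_le e) h0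
  have hnext : e < aseq F k (i + 1) := by
    by_contra hcon
    push_neg at hcon
    have hb : i + 1 ≤ e := by
      have h1 := aseq_lower (F := F) k (i + 1)
      have h2 := ell_pos (F := F) k
      omega
    have h3 : i + 1 ≤ i := Nat.le_findGreatest (P := fun i => aseq F k i ≤ e) hb hcon
    omega
  rcases eq_or_lt_of_le hile with heq | hlt
  · exact ⟨i, heq⟩
  · exfalso
    have hd := estar_mem hF k
    rw [aseq_succ] at hnext
    have hlev := atom_level hF (le_refl k) hd (le_of_lt hlt) hnext
    have hge : ell F k ≤ aseq F k i := by have := aseq_lower (F := F) k i; omega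
    have := nextD_min hge hlev.1
    omega

/-- the index of the final atom of stage `k+1` -/
noncomputable def istar (hF : ThicklySyndetic F) (k : ℕ) : ℕ :=
  (exists_aseq_eq_estar hF k).choose

lemma aseq_istar (hF : ThicklySyndetic F) (k : ℕ) :
    aseq F k (istar hF k) = nextD F (ell F k) (ell F k) :=
  (exists_aseq_eq_estar hF k).choose_spec

lemma jstar_estar (hF : ThicklySyndetic F) (k : ℕ) :
    jstar F k (nextD F (ell F k) (ell F k)) = k := by
  have h1 := jstar_le (F := F) k (nextD F (ell F k) (ell F k))
  have h2 := le_jstar (le_refl k) (estar_mem hF k)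
  omega

lemma alen_estar (hF : ThicklySyndetic F) (k : ℕ) :
    alen F k (nextD F (ell F k) (ell F k)) = ell F k := by
  rw [alen_mem (Dn_mem_F (estar_mem hF k) (ell_pos k)), jstar_estar hF k]

lemma aseq_istar_succ (hF : ThicklySyndetic F) (k : ℕ) :
    aseq F k (istar hF k + 1) = ell F (k + 1) := by
  rw [aseq_succ, aseq_istar hF k, alen_estar hF k, ell_succ]

lemma posStage_eq (hF : ThicklySyndetic F) {k q : ℕ} (h1 : ell F k ≤ q)
    (h2 : q < ell F (k + 1)) : posStage F q = k := by
  have hq1 : 1 ≤ q := le_trans (ell_pos k) h1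
  have hge : k ≤ posStage F q := by
    have hb : k ≤ q := by have := ell_lower hF k; omega
    exact Nat.le_findGreatest (P := fun k => ell F k ≤ q) hb h1
  by_contra hne
  have hgt : k + 1 ≤ posStage F q := by omega
  have hP : ell F (posStage F q) ≤ q := posStage_le hq1
  have : ell F (k + 1) ≤ ell F (posStage F q) := (ell_strictMono hF).monotone hgt
  omega

lemma aidx_lt {q : ℕ} (hq : 1 ≤ q) : q < aseq F (posStage F q) (aidx F q + 1) := by
  by_contra hcon
  push_neg at hcon
  have hb : aidx F q + 1 ≤ q := by
    have h1 := aseq_lower (F := F) (posStage F q) (aidx F q + 1)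
    have h2 := ell_pos (F := F) (posStage F q)
    omega
  have h2 : aidx F q + 1 ≤ aidx F q :=
    Nat.le_findGreatest (P := fun i => aseq F (posStage F q) i ≤ q) hb hcon
  omega

lemma atom_eq (hF : ThicklySyndetic F) {k i r : ℕ} (hik : i ≤ istar hF k)
    (h1 : aseq F k i ≤ r) (h2 : r < aseq F k (i + 1)) :
    posStage F r = k ∧ aidx F r = i := by
  have hmono := aseq_strictMono (F := F) k
  have hell : ell F k ≤ r := by
    have : aseq F k 0 ≤ aseq F k i := hmono.monotone (Nat.zero_le i)
    rw [aseq_zero] at this; omega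
  have hltell : r < ell F (k + 1) := by
    have : aseq F k (i + 1) ≤ aseq F k (istar hF k + 1) := hmono.monotone (by omega)
    rw [aseq_istar_succ hF k] at this; omega
  have hps : posStage F r = k := posStage_eq hF hell hltell
  refine ⟨hps, ?_⟩
  have hr1 : 1 ≤ r := le_trans (ell_pos k) hell
  have hge : i ≤ aidx F r := by
    have hb : i ≤ r := by have := aseq_lower (F := F) k i; omega
    have := Nat.le_findGreatest (P := fun i' => aseq F (posStage F r) i' ≤ r) hb
      (by rw [hps]; exact h1)
    exact this
  have haidxle : aseq F (posStage F r) (aidx F r) ≤ r := atomStart_le hr1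
  rw [hps] at haidxle
  by_contra hne
  have hgt : i + 1 ≤ aidx F r := by omega
  have : aseq F k (i + 1) ≤ aseq F k (aidx F r) := hmono.monotone hgt
  omega

lemma atomStart_eq (hF : ThicklySyndetic F) {k i r : ℕ} (hik : i ≤ istar hF k)
    (h1 : aseq F k i ≤ r) (h2 : r < aseq F k (i + 1)) :
    atomStart F r = aseq F k i := by
  obtain ⟨hps, hai⟩ := atom_eq hF hik h1 h2
  rw [atomStart_def, hps, hai]

lemma atom_copy (hF : ThicklySyndetic F) {k i : ℕ} (hik : i ≤ istar hF k)
    (hpF : aseq F k i ∈ F) :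
    ∀ t < alen F k (aseq F k i), yfun F (aseq F k i + t) = yfun F t := by
  intro t ht
  have hp1 : 1 ≤ aseq F k i := by
    have h1 := aseq_lower (F := F) k i
    have h2 := ell_pos (F := F) k
    omega
  have h2 : aseq F k i + t < aseq F k (i + 1) := by rw [aseq_succ]; omega
  have hstart : atomStart F (aseq F k i + t) = aseq F k i :=
    atomStart_eq hF hik (by omega) h2
  rw [yfun_eq (by omega), hstart, if_pos hpF]
  congr 1
  omega

lemma yfun_support (h0 : 0 ∈ F) : ∀ q, yfun F q = true → q ∈ F := by
  intro q hq
  rcases Nat.eq_zero_or_pos q with rfl | hq1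
  · exact h0
  · rw [yfun_eq hq1] at hq
    by_cases hpF : atomStart F q ∈ F
    · have hlt := aidx_lt (F := F) hq1
      rw [aseq_succ] at hlt
      rw [atomStart_def] at hpF
      have hDn := mem_Dn_alen (k := posStage F q) hpF
      have hle := atomStart_le (F := F) hq1
      rw [atomStart_def] at hle
      have := hDn (q - aseq F (posStage F q) (aidx F q)) (by omega)
      have heq : aseq F (posStage F q) (aidx F q) +
          (q - aseq F (posStage F q) (aidx F q)) = q := by omega
      rwa [heq] at this
    · rw [if_neg hpF] at hq
      simp at hq


/-- The "walk right" step: starting from any atom start of stage `k+1` with enough room,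
there is a nearby full copy of the prefix `u_s`. -/
lemma walk (hF : ThicklySyndetic F) {s Ns : ℕ} (hs : 0 < s)
    (hNs : ∀ m, nextD F s m ≤ m + Ns) {k j : ℕ} (hsj : s = ell F j) (hjk : j ≤ k)
    {i0 : ℕ} (hi0 : i0 ≤ istar hF k)
    (hroom : aseq F k i0 + Ns + s ≤ ell F (k + 1)) :
    ∃ q, aseq F k i0 ≤ q ∧ q ≤ aseq F k i0 + Ns ∧ q + s ≤ ell F (k + 1) ∧
      ∀ i < s, yfun F (q + i) = yfun F i := by
  obtain ⟨d, hd1, hd2, hd3⟩ : ∃ d, aseq F k i0 ≤ d ∧ d ∈ Dn F s ∧ d ≤ aseq F k i0 + Ns :=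
    ⟨nextD F s (aseq F k i0), (nextD_spec hF s _).1, (nextD_spec hF s _).2, hNs _⟩
  have hlow := aseq_lower (F := F) k i0
  have hellpos := ell_pos (F := F) k
  have hdlt : d < ell F (k + 1) := by omega
  have hd0 : 1 ≤ d := by omega
  have hps : posStage F d = k := posStage_eq hF (by omega) hdlt
  have hilow := atomStart_le (F := F) hd0
  rw [atomStart_def, hps] at hilow
  have hihi := aidx_lt (F := F) hd0
  rw [hps, aseq_succ] at hihi
  have hi2le : aidx F d ≤ istar hF k := by
    by_contra hcon
    push_neg at hcon
    have h5 : aseq F k (istar hF k + 1) ≤ aseq F k (aidx F d) :=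
      (aseq_strictMono (F := F) k).monotone hcon
    rw [aseq_istar_succ hF k] at h5
    omega
  have hi2ge : aseq F k i0 ≤ aseq F k (aidx F d) := by
    rcases le_or_gt i0 (aidx F d) with h | h
    · exact (aseq_strictMono (F := F) k).monotone h
    · exfalso
      have h5 : aseq F k (aidx F d + 1) ≤ aseq F k i0 :=
        (aseq_strictMono (F := F) k).monotone h
      rw [aseq_succ] at h5
      omega
  have hlev := atom_level hF hjk (hsj ▸ hd2) hilow hihi
  have hp2F : aseq F k (aidx F d) ∈ F := Dn_mem_F hlev.1 (by omega)
  exact ⟨aseq F k (aidx F d), hi2ge, by omega, by omega,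
    fun i hi => atom_copy hF hi2le hp2F i (by have := hlev.2; omega)⟩

/-- The main recurrence lemma: occurrences of the prefix of length `ell F j`
appear syndetically inside every prefix `ell F m`. -/
lemma main_rec (hF : ThicklySyndetic F) {s Ns j m1 : ℕ} (hsj : s = ell F j)
    (hNs : ∀ m, nextD F s m ≤ m + Ns) (hm1 : s + Ns ≤ ell F m1) :
    ∀ m x, x + (ell F m1 + Ns + 2 * s + 1) ≤ ell F m →
      ∃ q, x ≤ q ∧ q ≤ x + (ell F m1 + Ns + 2 * s + 1 + Ns) ∧ q + s ≤ ell F m ∧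
        ∀ i < s, yfun F (q + i) = yfun F i := by
  have hs : 0 < s := by rw [hsj]; exact ell_pos j
  set C := ell F m1 + Ns + 2 * s + 1 with hC
  set G := C + Ns with hG
  intro m
  induction m using Nat.strong_induction_on with
  | _ m IH =>
    intro x hx
    match m with
    | 0 => simp [ell] at hx; omega
    | Nat.succ k =>
      have hx : x + C ≤ ell F (k + 1) := hx
      show ∃ q, x ≤ q ∧ q ≤ x + G ∧ q + s ≤ ell F (k + 1) ∧
        ∀ i < s, yfun F (q + i) = yfun F i
      -- basic stage facts
      have hm1k : m1 ≤ k := by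
        have h1 : ell F m1 < ell F (k + 1) := by omega
        have := (ell_strictMono hF).lt_iff_lt.mp h1
        omega
      have hlk : s + Ns ≤ ell F k := le_trans hm1 ((ell_strictMono hF).monotone hm1k)
      have hjk : j ≤ k := by
        have : ell F j ≤ ell F k := by omega
        by_contra hcon
        push_neg at hcon
        have := ell_strictMono hF hcon
        omega
      have hestar := estar_ge hF k
      have hellsucc := ell_succ (F := F) k
      by_cases hc1 : x + C ≤ ell F k
      · obtain ⟨q, hq1, hq2, hq3, hq4⟩ := IH k (by omega) x hc1
        have : ell F k ≤ ell F (k + 1) := le_of_lt (ell_strictMono hF (by omega))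
        exact ⟨q, hq1, hq2, by omega, hq4⟩
      · push_neg at hc1
        by_cases hc2 : x < ell F k
        · -- walk from the stage start
          obtain ⟨q, hq1, hq2, hq3, hq4⟩ := walk hF hs hNs hsj hjk (i0 := 0)
            (Nat.zero_le _) (by rw [aseq_zero]; omega)
          rw [aseq_zero] at hq1 hq2
          exact ⟨q, by omega, by omega, hq3, hq4⟩
        · push_neg at hc2
          have hx1 : 1 ≤ x := le_trans (ell_pos k) hc2
          have hxlt : x < ell F (k + 1) := by omega
          have hpsx : posStage F x = k := posStage_eq hF hc2 hxlt
          have hbr1 := atomStart_le (F := F) hx1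
          rw [atomStart_def, hpsx] at hbr1
          have hbr2 := aidx_lt (F := F) hx1
          rw [hpsx] at hbr2
          have hile : aidx F x ≤ istar hF k := by
            by_contra hcon
            push_neg at hcon
            have : aseq F k (istar hF k + 1) ≤ aseq F k (aidx F x) :=
              (aseq_strictMono (F := F) k).monotone hcon
            rw [aseq_istar_succ hF k] at this
            omega
          by_cases hfin : aidx F x = istar hF k
          · -- inside the final atom: descend into stage k
            rw [hfin] at hbr1 hbr2
            rw [aseq_istar hF k] at hbr1
            have hbr2' : x < ell F (k + 1) := hxlt
            have hx' : (x - nextD F (ell F k) (ell F k)) + C ≤ ell F k := by omega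
            obtain ⟨q', hq1, hq2, hq3, hq4⟩ := IH k (by omega) _ hx'
            have hcopy := atom_copy hF (le_refl (istar hF k))
              (by rw [aseq_istar hF k]; exact Dn_mem_F (estar_mem hF k) (ell_pos k))
            rw [aseq_istar hF k, alen_estar hF k] at hcopy
            refine ⟨nextD F (ell F k) (ell F k) + q', by omega, by omega, by omega,
              fun i hi => ?_⟩
            rw [add_assoc, hcopy (q' + i) (by omega), hq4 i hi]
          · have hfinlt : aidx F x < istar hF k := lt_of_le_of_ne hile hfin
            rw [aseq_succ] at hbr2
            have hbound : aseq F k (aidx F x) + alen F k (aseq F k (aidx F x)) ≤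
                nextD F (ell F k) (ell F k) := by
              have h5 : aseq F k (aidx F x + 1) ≤ aseq F k (istar hF k) :=
                (aseq_strictMono (F := F) k).monotone hfinlt
              rw [aseq_succ] at h5
              rwa [aseq_istar hF k] at h5
            by_cases hdesc : aseq F k (aidx F x) ∈ F ∧
                x + C ≤ aseq F k (aidx F x) + alen F k (aseq F k (aidx F x))
            · -- descend into the atom containing x
              obtain ⟨hpF, hxe⟩ := hdesc
              have halen : alen F k (aseq F k (aidx F x)) =
                  ell F (jstar F k (aseq F k (aidx F x))) := alen_mem hpF
              have hjstk : jstar F k (aseq F k (aidx F x)) ≤ k := jstar_le k _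
              have hx' : (x - aseq F k (aidx F x)) + C ≤
                  ell F (jstar F k (aseq F k (aidx F x))) := by omega
              obtain ⟨q', hq1, hq2, hq3, hq4⟩ := IH _ (by omega) _ hx'
              have hcopy := atom_copy hF (le_of_lt hfinlt) hpF
              refine ⟨aseq F k (aidx F x) + q', by omega, by omega, by omega, fun i hi => ?_⟩
              rw [add_assoc, hcopy (q' + i) (by omega), hq4 i hi]
            · -- exit right and walk
              have he2 : aseq F k (aidx F x) + alen F k (aseq F k (aidx F x)) ≤ x + C := by
                rcases not_and_or.mp hdesc with hnF | hnle
                · rw [alen_not_mem hnF]; omega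
                · push_neg at hnle; omega
              obtain ⟨q, hq1, hq2, hq3, hq4⟩ := walk hF hs hNs hsj hjk
                (i0 := aidx F x + 1) hfinlt (by rw [aseq_succ]; omega)
              rw [aseq_succ] at hq1 hq2
              refine ⟨q, by omega, by omega, hq3, hq4⟩

/-- Syndeticity of the occurrences of every prefix of the constructed point. -/
lemma yfun_unifrec (hF : ThicklySyndetic F) (n : ℕ) :
    ∃ G, ∀ x, ∃ q, x ≤ q ∧ q ≤ x + G ∧ ∀ i < n, yfun F (q + i) = yfun F i := by
  set s := ell F n with hs
  obtain ⟨Ns, hNsx⟩ := Dn_syndetic hF s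
  have hNs : ∀ m, nextD F s m ≤ m + Ns := by
    intro m
    obtain ⟨d, hd1, hd2, hd3⟩ := hNsx m
    exact le_trans (nextD_min hd1 hd3) hd2
  have hm1 : s + Ns ≤ ell F (s + Ns) := by
    have := ell_lower hF (s + Ns); omega
  refine ⟨ell F (s + Ns) + Ns + 2 * s + 1 + Ns, fun x => ?_⟩
  have hm : x + (ell F (s + Ns) + Ns + 2 * s + 1) ≤
      ell F (x + (ell F (s + Ns) + Ns + 2 * s + 1)) := by
    have := ell_lower hF (x + (ell F (s + Ns) + Ns + 2 * s + 1)); omega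
  obtain ⟨q, hq1, hq2, _, hq4⟩ := main_rec hF rfl hNs hm1 _ x hm
  have hns : n ≤ s := by have := ell_lower hF n; omega
  exact ⟨q, hq1, hq2, fun i hi => hq4 i (by omega)⟩

end Aux2

/-! ### Topological part: the subshift -/

/-- the one-sided shift on `ℕ → Bool` -/
def shf : (ℕ → Bool) → (ℕ → Bool) := fun z i => z (i + 1)

lemma shf_iter (m : ℕ) (z : ℕ → Bool) (i : ℕ) : shf^[m] z i = z (i + m) := by
  induction m generalizing z with
  | zero => simp
  | succ m ih =>
    rw [Function.iterate_succ_apply, ih (shf z)]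
    rfl

lemma shf_cont : Continuous shf :=
  continuous_pi fun i => continuous_apply (i + 1)

lemma cyl_open (w : ℕ → Bool) (M : ℕ) : IsOpen {z : ℕ → Bool | ∀ i < M, z i = w i} := by
  have heq : {z : ℕ → Bool | ∀ i < M, z i = w i} =
      ⋂ i ∈ Finset.range M, (fun z : ℕ → Bool => z i) ⁻¹' {w i} := by
    ext z; simp [Finset.mem_range]
  rw [heq]
  exact isOpen_biInter_finset fun i _ =>
    IsOpen.preimage (continuous_apply i) (isOpen_discrete {w i})

lemma nhds_cyl (w : ℕ → Bool) {U : Set (ℕ → Bool)} (hU : U ∈ nhds w) :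
    ∃ M, ∀ z, (∀ i < M, z i = w i) → z ∈ U := by
  rw [nhds_pi, Filter.mem_pi] at hU
  obtain ⟨I, hIf, V, hV, hsub⟩ := hU
  obtain ⟨b, hb⟩ := hIf.bddAbove
  refine ⟨b + 1, fun z hz => hsub ?_⟩
  intro i hi
  have hzi : z i = w i := hz i (by have := hb hi; omega)
  rw [hzi]
  exact mem_of_mem_nhds (hV i)


/-- every thickly syndetic subset of `ℤ₊` containing `0` contains an sm-set. -/
theorem statement_8 (F : Set ℕ) (hF : ThicklySyndetic F) (h0 : (0 : ℕ) ∈ F) :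
    ∃ (Y : Type) (_ : MetricSpace Y) (_ : CompactSpace Y) (S : Y → Y),
      Continuous S ∧ Function.Surjective S ∧ MinimalSys S ∧
        ∃ (y : Y) (V : Set Y), IsOpen V ∧ y ∈ V ∧ retTimes S y V ⊆ F := by
  classical
  set Yset : Set (ℕ → Bool) := closure (Set.range fun n : ℕ => shf^[n] (yfun F)) with hYset
  have hYclosed : IsClosed Yset := isClosed_closure
  have hrange_sub : ∀ z ∈ (Set.range fun n : ℕ => shf^[n] (yfun F)),
      shf z ∈ (Set.range fun n : ℕ => shf^[n] (yfun F)) := by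
    rintro _ ⟨n, rfl⟩
    exact ⟨n + 1, by simp [Function.iterate_succ_apply']⟩
  have hmapsto : ∀ z ∈ Yset, shf z ∈ Yset := by
    intro z hz
    have h1 : shf z ∈ closure (shf '' (Set.range fun n : ℕ => shf^[n] (yfun F))) :=
      image_closure_subset_closure_image shf_cont (Set.mem_image_of_mem shf hz)
    exact closure_mono (by rintro w ⟨u, hu, rfl⟩; exact hrange_sub u hu) h1
  have hy_mem : yfun F ∈ Yset := subset_closure ⟨0, rfl⟩
  letI : MetricSpace {z // z ∈ Yset} := TopologicalSpace.metrizableSpaceMetric _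
  haveI hCS : CompactSpace {z // z ∈ Yset} := isCompact_iff_compactSpace.mp hYclosed.isCompact
  set S : {z // z ∈ Yset} → {z // z ∈ Yset} := fun w => ⟨shf w.1, hmapsto _ w.2⟩ with hS
  have hScont : Continuous S :=
    Continuous.subtype_mk (shf_cont.comp continuous_subtype_val) _
  have hSiter : ∀ (n : ℕ) (w : {z // z ∈ Yset}), (S^[n] w).1 = shf^[n] w.1 := by
    intro n
    induction n with
    | zero => intro w; rfl
    | succ n ih =>
      intro w
      rw [Function.iterate_succ_apply', Function.iterate_succ_apply', ← ih w]
  set y0 : {z // z ∈ Yset} := ⟨yfun F, hy_mem⟩ with hy0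
  -- minimality
  have hmin : MinimalSys S := by
    intro B hBne hBcl hBmap
    obtain ⟨z0, hz0⟩ := hBne
    have hvalBcl : IsClosed (Subtype.val '' B) :=
      (hBcl.isCompact.image continuous_subtype_val).isClosed
    have hinv : ∀ z ∈ Subtype.val '' B, shf z ∈ Subtype.val '' B := by
      rintro _ ⟨w, hw, rfl⟩
      exact ⟨S w, hBmap hw, rfl⟩
    have horb : ∀ n : ℕ, shf^[n] z0.1 ∈ Subtype.val '' B := by
      intro n
      induction n with
      | zero => exact ⟨z0, hz0, rfl⟩
      | succ n ih => rw [Function.iterate_succ_apply']; exact hinv _ ih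
    have hyclo : yfun F ∈ closure (Set.range fun n : ℕ => shf^[n] z0.1) := by
      rw [mem_closure_iff]
      intro U hUopen hyU
      obtain ⟨M, hM⟩ := nhds_cyl (yfun F) (hUopen.mem_nhds hyU)
      obtain ⟨G, hG⟩ := yfun_unifrec hF M
      have hz0mem : z0.1 ∈ Yset := z0.2
      have hcylz : ∃ p : ℕ, ∀ i < M + G + 1, shf^[p] (yfun F) i = z0.1 i := by
        have hmc := mem_closure_iff.mp hz0mem {z | ∀ i < M + G + 1, z i = z0.1 i}
          (cyl_open z0.1 (M + G + 1)) (fun i _ => rfl)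
        obtain ⟨w, hw1, p, hp⟩ := hmc
        have hp' : shf^[p] (yfun F) = w := hp
        exact ⟨p, fun i hi => by rw [hp']; exact hw1 i hi⟩
      obtain ⟨p, hp⟩ := hcylz
      obtain ⟨q, hq1, hq2, hq3⟩ := hG p
      refine ⟨shf^[q - p] z0.1, hM _ ?_, ⟨q - p, rfl⟩⟩
      intro i hi
      rw [shf_iter, ← hp (i + (q - p)) (by omega), shf_iter]
      have heq : i + (q - p) + p = q + i := by omega
      rw [heq]
      exact hq3 i hi
    have hyB : yfun F ∈ Subtype.val '' B :=
      closure_minimal (by rintro _ ⟨n, rfl⟩; exact horb n) hvalBcl hyclo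
    have horb2 : ∀ n : ℕ, shf^[n] (yfun F) ∈ Subtype.val '' B := by
      intro n
      induction n with
      | zero => exact hyB
      | succ n ih => rw [Function.iterate_succ_apply']; exact hinv _ ih
    have hsubset : Yset ⊆ Subtype.val '' B :=
      closure_minimal (by rintro _ ⟨n, rfl⟩; exact horb2 n) hvalBcl
    apply Set.eq_univ_iff_forall.mpr
    intro w
    obtain ⟨b, hbB, hbw⟩ := hsubset w.2
    have : b = w := Subtype.ext hbw
    rwa [← this]
  -- surjectivity from minimality
  have hsurj : Function.Surjective S := by
    have hr : Set.range S = Set.univ := by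
      apply hmin (Set.range S) ⟨S y0, ⟨y0, rfl⟩⟩ (isCompact_range hScont).isClosed
      rintro _ ⟨w, rfl⟩
      exact ⟨S w, rfl⟩
    intro w
    have : w ∈ Set.range S := by rw [hr]; trivial
    exact this
  refine ⟨{z // z ∈ Yset}, inferInstance, inferInstance, S, hScont, hsurj, hmin,
    y0, {w : {z // z ∈ Yset} | w.1 0 = true}, ?_, ?_, ?_⟩
  · have hcont0 : Continuous fun w : {z // z ∈ Yset} => w.1 0 :=
      (continuous_apply 0).comp continuous_subtype_val
    exact IsOpen.preimage hcont0 (isOpen_discrete ({true} : Set Bool))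
  · show yfun F 0 = true
    exact yfun_zero
  · intro n hn
    have hval : (S^[n] y0).1 0 = true := hn
    rw [hSiter] at hval
    rw [shf_iter] at hval
    exact yfun_support h0 n (by simpa using hval)


end PaperFormal
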